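/- arXiv:2102.05629 — 2 statements merged into one kernel-verified Lean document; each statement's English description precedes it below -/
import Mathlib

section
/- For every d ≥ 1, every k ≥ 1, and every polynomial P: ℝ^d → ℝ of total degree at most k, it holds that E_{x~N(0,I_d)}[‖∇P(x)‖²] ≤ k · E_{x~N(0,I_d)}[P(x)²], where ‖·‖ is the Euclidean norm and ∇P is the gradient of P. -/
open MeasureTheory ProbabilityTheory Real
open scoped RealInnerProductSpace

noncomputable def stdGaussian (d : ℕ) : Measure (EuclideanSpace ℝ (Fin d)) :=
  (Measure.pi fun _ : Fin d => gaussianReal 0 1).map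
    (EuclideanSpace.equiv (Fin d) ℝ).symm

noncomputable def sgn (u : ℝ) : ℝ := if 0 ≤ u then 1 else -1

noncomputable def evalP {d : ℕ} (P : MvPolynomial (Fin d) ℝ)
    (x : EuclideanSpace ℝ (Fin d)) : ℝ :=
  MvPolynomial.eval (EuclideanSpace.equiv (Fin d) ℝ x) P

noncomputable def gradP {d : ℕ} (P : MvPolynomial (Fin d) ℝ)
    (x : EuclideanSpace ℝ (Fin d)) : EuclideanSpace ℝ (Fin d) :=
  WithLp.toLp 2 (fun i => MvPolynomial.eval (EuclideanSpace.equiv (Fin d) ℝ x) (MvPolynomial.pderiv i P))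

noncomputable def gradMatrix {d : ℕ} (P : MvPolynomial (Fin d) ℝ) :
    Matrix (Fin d) (Fin d) ℝ :=
  fun i j => ∫ x, gradP P x i * gradP P x j ∂(stdGaussian d)

noncomputable def eigSpace {d : ℕ} (M : Matrix (Fin d) (Fin d) ℝ) (η : ℝ) :
    Submodule ℝ (EuclideanSpace ℝ (Fin d)) :=
  Submodule.span ℝ {v | v ≠ 0 ∧ ∃ μ : ℝ, η ≤ μ ∧ M.mulVec v = μ • v}

noncomputable def smoothAlong {d : ℕ} (f : EuclideanSpace ℝ (Fin d) → ℝ)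
    (ξ x : EuclideanSpace ℝ (Fin d)) : ℝ :=
  ∫ g, f (x - ⟪ξ, x⟫ • ξ + g • ξ) ∂(gaussianReal 0 1)

/- ===== auxiliary development ===== -/
section Aux
open MeasureTheory ProbabilityTheory Real Filter Polynomial
open scoped ENNReal NNReal

-- 1-dimensional facts

noncomputable def γ1 : Measure ℝ := gaussianReal 0 1

instance : IsProbabilityMeasure γ1 := by rw [γ1]; infer_instance

lemma pdf_eq (x : ℝ) : gaussianPDFReal 0 1 x = (Real.sqrt (2 * π))⁻¹ * Real.exp (-(x ^ 2) / 2) := by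
  simp [gaussianPDFReal]

lemma integrable_pow_gauss_vol (n : ℕ) :
    Integrable (fun x : ℝ => x ^ n * Real.exp (-(x ^ 2) / 2)) := by
  have h := integrable_rpow_mul_exp_neg_mul_sq (b := (1:ℝ)/2) (by norm_num) (s := (n : ℝ))
    (by exact_mod_cast neg_one_lt_zero.trans_le (Nat.cast_nonneg n))
  simp only [Real.rpow_natCast] at h
  refine h.congr (Eventually.of_forall fun x => ?_)
  ring_nf

lemma integrable_poly_gauss_vol (p : ℝ[X]) :
    Integrable (fun x : ℝ => p.eval x * Real.exp (-(x ^ 2) / 2)) := by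
  induction p using Polynomial.induction_on' with
  | monomial n c =>
      simpa [mul_assoc] using (integrable_pow_gauss_vol n).const_mul c
  | add p q hp hq => simp only [eval_add, add_mul]; exact hp.add hq

lemma tendsto_poly_exp_top (p : ℝ[X]) :
    Tendsto (fun x => p.eval x * Real.exp (-(x ^ 2) / 2)) atTop (nhds 0) := by
  have h1 : Tendsto (fun x => p.eval x / Real.exp x) atTop (nhds 0) :=
    p.tendsto_div_exp_atTop
  have h2 : Tendsto (fun x : ℝ => Real.exp (x - x ^ 2 / 2)) atTop (nhds 0) := by
    apply Real.tendsto_exp_atBot.comp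
    apply tendsto_atBot_mono' atTop (f₁ := fun x : ℝ => -x + 2)
    · filter_upwards [eventually_ge_atTop (4:ℝ)] with x hx
      nlinarith
    · exact tendsto_atBot_add_const_right _ _ tendsto_neg_atTop_atBot
  have h3 := h1.mul h2
  rw [mul_zero] at h3
  refine h3.congr (fun x => ?_)
  rw [div_mul_eq_mul_div, mul_div_assoc, ← Real.exp_sub]
  ring_nf

lemma tendsto_poly_exp_bot (p : ℝ[X]) :
    Tendsto (fun x => p.eval x * Real.exp (-(x ^ 2) / 2)) atBot (nhds 0) := by
  have h := (tendsto_poly_exp_top (p.comp (-X))).comp tendsto_neg_atBot_atTop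
  refine h.congr (fun x => ?_)
  simp [Function.comp, Polynomial.eval_comp]

lemma γ1_eq : γ1 = volume.withDensity (fun x => ((gaussianPDFReal 0 1 x).toNNReal : ℝ≥0∞)) := by
  rw [γ1, gaussianReal_of_var_ne_zero 0 one_ne_zero]
  rfl

lemma integral_gauss1 (g : ℝ → ℝ) :
    ∫ x, g x ∂γ1 = ∫ x, g x * gaussianPDFReal 0 1 x := by
  rw [γ1_eq, integral_withDensity_eq_integral_smul
    (measurable_gaussianPDFReal 0 1).real_toNNReal]
  congr 1
  ext x
  rw [NNReal.smul_def, smul_eq_mul, Real.coe_toNNReal _ (gaussianPDFReal_nonneg 0 1 x), mul_comm]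

lemma integrable_gauss1_iff (g : ℝ → ℝ) :
    Integrable g γ1 ↔ Integrable (fun x => g x * gaussianPDFReal 0 1 x) := by
  rw [γ1_eq, integrable_withDensity_iff
    ((measurable_gaussianPDFReal 0 1).real_toNNReal.coe_nnreal_ennreal)
    (Eventually.of_forall fun x => ENNReal.coe_lt_top)]
  simp only [ENNReal.coe_toReal, Real.coe_toNNReal _ (gaussianPDFReal_nonneg 0 1 _)]

lemma key_vol (p : ℝ[X]) :
    ∫ x : ℝ, (x * p.eval x) * Real.exp (-(x ^ 2) / 2) =
      ∫ x : ℝ, (derivative p).eval x * Real.exp (-(x ^ 2) / 2) := by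
  have hder : ∀ x : ℝ, HasDerivAt (fun x => p.eval x * Real.exp (-(x ^ 2) / 2))
      (((derivative p).eval x - x * p.eval x) * Real.exp (-(x ^ 2) / 2)) x := by
    intro x
    have h1 : HasDerivAt (fun x : ℝ => -(x ^ 2) / 2) (-x) x := by
      have := ((hasDerivAt_pow 2 x).neg.div_const 2)
      refine this.congr_deriv ?_
      ring
    have h2 := h1.exp
    have h3 := (p.hasDerivAt x).mul h2
    refine h3.congr_deriv ?_
    ring
  have hint : Integrable (fun x : ℝ =>
      ((derivative p).eval x - x * p.eval x) * Real.exp (-(x ^ 2) / 2)) := by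
    have := integrable_poly_gauss_vol (derivative p - X * p)
    simpa using this
  have h0 := integral_of_hasDerivAt_of_tendsto hder hint (tendsto_poly_exp_bot p)
    (tendsto_poly_exp_top p)
  rw [sub_zero] at h0
  have hsplit : Integrable (fun x : ℝ => (derivative p).eval x * Real.exp (-(x ^ 2) / 2)) := by
    simpa using integrable_poly_gauss_vol (derivative p)
  have hsplit2 : Integrable (fun x : ℝ => (x * p.eval x) * Real.exp (-(x ^ 2) / 2)) := by
    have := integrable_poly_gauss_vol (X * p)
    simp only [Polynomial.eval_mul, Polynomial.eval_X] at this
    exact this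
  have : ∫ x : ℝ, (((derivative p).eval x) * Real.exp (-(x ^ 2) / 2)
      - (x * p.eval x) * Real.exp (-(x ^ 2) / 2)) = 0 := by
    rw [← h0]; congr 1; ext x; ring
  rw [integral_sub hsplit hsplit2] at this
  linarith

lemma integrable_poly_gauss (p : ℝ[X]) : Integrable (fun x => p.eval x) γ1 := by
  rw [integrable_gauss1_iff]
  have := (integrable_poly_gauss_vol p).const_mul (Real.sqrt (2 * π))⁻¹
  refine this.congr (Eventually.of_forall fun x => ?_)
  simp only [pdf_eq]; ring

lemma integrable_pow_gauss (n : ℕ) : Integrable (fun x : ℝ => x ^ n) γ1 := by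
  have := integrable_poly_gauss (X ^ n)
  simp only [Polynomial.eval_pow, Polynomial.eval_X] at this
  exact this

lemma stein1 (p : ℝ[X]) :
    ∫ x, x * p.eval x ∂γ1 = ∫ x, (derivative p).eval x ∂γ1 := by
  rw [integral_gauss1, integral_gauss1]
  simp only [pdf_eq]
  have := key_vol p
  calc ∫ x, x * p.eval x * ((Real.sqrt (2*π))⁻¹ * Real.exp (-(x^2)/2))
      = (Real.sqrt (2*π))⁻¹ * ∫ x, (x * p.eval x) * Real.exp (-(x^2)/2) := by
        rw [← integral_const_mul]; congr 1; ext x; ring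
    _ = (Real.sqrt (2*π))⁻¹ * ∫ x, (derivative p).eval x * Real.exp (-(x^2)/2) := by rw [this]
    _ = _ := by rw [← integral_const_mul]; congr 1; ext x; ring

noncomputable def m1 (n : ℕ) : ℝ := ∫ x, x ^ n ∂γ1

lemma m1_rec (n : ℕ) : m1 (n + 1) = n * m1 (n - 1) := by
  have h := stein1 (X ^ n)
  simp only [Polynomial.derivative_X_pow, Polynomial.eval_mul, Polynomial.eval_pow,
    Polynomial.eval_X, Polynomial.eval_natCast, Polynomial.eval_C] at h
  rw [m1, m1]
  calc ∫ x, x ^ (n+1) ∂γ1 = ∫ x, x * x ^ n ∂γ1 := by congr 1; ext x; ring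
    _ = ∫ x, (n : ℝ) * x ^ (n-1) ∂γ1 := by rw [h]
    _ = (n : ℝ) * ∫ x, x ^ (n-1) ∂γ1 := integral_const_mul _ _

end Aux

section AuxMulti
open MeasureTheory ProbabilityTheory Real Filter MvPolynomial
open scoped ENNReal NNReal

noncomputable def γd (d : ℕ) : Measure (Fin d → ℝ) := Measure.pi fun _ => γ1

instance (d : ℕ) : IsProbabilityMeasure (γd d) := by rw [γd]; infer_instance

variable {d : ℕ}

lemma int_prod_pow (β : Fin d → ℕ) :
    Integrable (fun x : Fin d → ℝ => ∏ j, x j ^ β j) (γd d) :=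
  Integrable.fintype_prod (f := fun j t => t ^ β j) (μ := fun _ => γ1)
    (fun i => integrable_pow_gauss (β i))

lemma val_prod_pow (β : Fin d → ℕ) :
    ∫ x, (∏ j, x j ^ β j) ∂(γd d) = ∏ j, m1 (β j) :=
  integral_fintype_prod_eq_prod (fun j t => t ^ β j) (μ := fun _ => γ1)

lemma eval_monomial_prod (α : Fin d →₀ ℕ) (c : ℝ) (x : Fin d → ℝ) :
    eval x (monomial α c) = c * ∏ j, x j ^ α j := by
  rw [eval_monomial, Finsupp.prod_pow]

lemma integrable_eval (Q : MvPolynomial (Fin d) ℝ) :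
    Integrable (fun x => eval x Q) (γd d) := by
  have : (fun x : Fin d → ℝ => eval x Q)
      = fun x => ∑ α ∈ Q.support, Q.coeff α * ∏ j, x j ^ α j := by
    ext x; rw [eval_eq']
  rw [this]
  exact integrable_finset_sum _ (fun α _ => (int_prod_pow _).const_mul _)

lemma integral_monomial (α : Fin d →₀ ℕ) (c : ℝ) :
    ∫ x, eval x (monomial α c) ∂(γd d) = c * ∏ j, m1 (α j) := by
  simp only [eval_monomial_prod]
  rw [integral_const_mul, val_prod_pow]

lemma prod_pow_update (x : Fin d → ℝ) (α : Fin d →₀ ℕ) (i : Fin d) :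
    x i * ∏ j, x j ^ α j = ∏ j, x j ^ (if j = i then α i + 1 else α j) := by
  rw [← Finset.mul_prod_erase Finset.univ (fun j => x j ^ α j) (Finset.mem_univ i),
      ← Finset.mul_prod_erase Finset.univ (fun j => x j ^ (if j = i then α i + 1 else α j))
        (Finset.mem_univ i)]
  rw [if_pos rfl, pow_succ]
  have h2 : ∏ j ∈ Finset.univ.erase i, x j ^ (if j = i then α i + 1 else α j)
      = ∏ j ∈ Finset.univ.erase i, x j ^ α j :=
    Finset.prod_congr rfl (fun j hj => by rw [if_neg (Finset.ne_of_mem_erase hj)])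
  rw [h2]
  ring

lemma m1_prod_update (α : Fin d →₀ ℕ) (i : Fin d) :
    ∏ j, m1 (if j = i then α i + 1 else α j)
      = (α i : ℝ) * ∏ j : Fin d, m1 ((α - Finsupp.single i 1 : Fin d →₀ ℕ) j) := by
  rw [← Finset.mul_prod_erase Finset.univ (fun j => m1 (if j = i then α i + 1 else α j))
        (Finset.mem_univ i),
      ← Finset.mul_prod_erase Finset.univ (fun j => m1 ((α - Finsupp.single i 1 : Fin d →₀ ℕ) j))
        (Finset.mem_univ i)]
  rw [if_pos rfl, m1_rec]
  have h1 : (α - Finsupp.single i 1 : Fin d →₀ ℕ) i = α i - 1 := by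
    rw [Finsupp.tsub_apply, Finsupp.single_eq_same]
  have h2 : ∏ j ∈ Finset.univ.erase i, m1 (if j = i then α i + 1 else α j)
      = ∏ j ∈ Finset.univ.erase i, m1 ((α - Finsupp.single i 1 : Fin d →₀ ℕ) j) := by
    refine Finset.prod_congr rfl (fun j hj => ?_)
    rw [if_neg (Finset.ne_of_mem_erase hj), Finsupp.tsub_apply,
      Finsupp.single_eq_of_ne' (Ne.symm (Finset.ne_of_mem_erase hj)), Nat.sub_zero]
  rw [h2, h1]
  ring

lemma stein_monomial (i : Fin d) (α : Fin d →₀ ℕ) (c : ℝ) :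
    ∫ x, x i * eval x (monomial α c) ∂(γd d)
      = ∫ x, eval x (pderiv i (monomial α c)) ∂(γd d) := by
  have hL : (fun x : Fin d → ℝ => x i * eval x (monomial α c))
      = fun x => c * ∏ j, x j ^ (if j = i then α i + 1 else α j) := by
    ext x
    rw [eval_monomial_prod, ← mul_assoc, mul_comm (x i) c, mul_assoc, prod_pow_update]
  rw [hL, integral_const_mul, val_prod_pow, pderiv_monomial, integral_monomial,
    m1_prod_update]
  ring

lemma stein_d (i : Fin d) (Q : MvPolynomial (Fin d) ℝ) :
    ∫ x, eval x (X i * Q) ∂(γd d) = ∫ x, eval x (pderiv i Q) ∂(γd d) := by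
  have hQ : ∫ x, eval x (X i * Q) ∂(γd d)
      = ∑ α ∈ Q.support, ∫ x, x i * eval x (monomial α (Q.coeff α)) ∂(γd d) := by
    rw [← integral_finset_sum _ (fun α _ => by
      have : (fun x : Fin d → ℝ => x i * eval x (monomial α (Q.coeff α)))
          = fun x => eval x (X i * monomial α (Q.coeff α)) := by ext x; simp
      rw [this]; exact integrable_eval _)]
    congr 1; ext x
    simp only [eval_mul, eval_X, ← Finset.mul_sum]
    congr 1
    conv_lhs => rw [Q.as_sum]
    rw [map_sum]
  rw [hQ]
  rw [Finset.sum_congr rfl (fun α _ => stein_monomial i α (Q.coeff α))]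
  rw [← integral_finset_sum _ (fun α _ => integrable_eval _)]
  congr 1; ext x
  rw [← map_sum, ← map_sum (pderiv i), ← Q.as_sum]

lemma pderiv_pderiv_comm (i j : Fin d) (Q : MvPolynomial (Fin d) ℝ) :
    MvPolynomial.pderiv i (MvPolynomial.pderiv j Q)
      = MvPolynomial.pderiv j (MvPolynomial.pderiv i Q) := by
  induction Q using MvPolynomial.induction_on' with
  | monomial α c =>
    by_cases hij : i = j
    · subst hij; rfl
    · simp only [pderiv_monomial]
      have hexp : α - Finsupp.single j 1 - Finsupp.single i 1
          = α - Finsupp.single i 1 - Finsupp.single j 1 := by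
        ext a; simp only [Finsupp.tsub_apply]; omega
      have h1 : (α - Finsupp.single j 1 : Fin d →₀ ℕ) i = α i := by
        rw [Finsupp.tsub_apply, Finsupp.single_eq_of_ne' (Ne.symm hij), Nat.sub_zero]
      have h2 : (α - Finsupp.single i 1 : Fin d →₀ ℕ) j = α j := by
        rw [Finsupp.tsub_apply, Finsupp.single_eq_of_ne' hij, Nat.sub_zero]
      rw [hexp, h1, h2]
      ring_nf
  | add p q hp hq => simp [map_add, hp, hq]

noncomputable def Lpoly {d : ℕ} (Q : MvPolynomial (Fin d) ℝ) : MvPolynomial (Fin d) ℝ :=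
  ∑ i : Fin d, (MvPolynomial.X i * MvPolynomial.pderiv i Q
    - MvPolynomial.pderiv i (MvPolynomial.pderiv i Q))

lemma pderiv_Lpoly (i : Fin d) (Q : MvPolynomial (Fin d) ℝ) :
    MvPolynomial.pderiv i (Lpoly Q) = Lpoly (MvPolynomial.pderiv i Q)
      + MvPolynomial.pderiv i Q := by
  classical
  rw [Lpoly, map_sum, Lpoly]
  have key : ∀ j : Fin d,
      MvPolynomial.pderiv i (MvPolynomial.X j * MvPolynomial.pderiv j Q
        - MvPolynomial.pderiv j (MvPolynomial.pderiv j Q))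
      = (MvPolynomial.X j * MvPolynomial.pderiv j (MvPolynomial.pderiv i Q)
        - MvPolynomial.pderiv j (MvPolynomial.pderiv j (MvPolynomial.pderiv i Q)))
        + (if j = i then MvPolynomial.pderiv i Q else 0) := by
    intro j
    rw [map_sub, MvPolynomial.pderiv_mul]
    by_cases hji : j = i
    · subst hji
      rw [if_pos rfl, MvPolynomial.pderiv_X_self]
      ring
    · rw [if_neg hji, MvPolynomial.pderiv_X_of_ne hji,
        pderiv_pderiv_comm i j (MvPolynomial.pderiv j Q), pderiv_pderiv_comm i j Q]
      ring
  rw [Finset.sum_congr rfl (fun j _ => key j), Finset.sum_add_distrib,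
    Finset.sum_ite_eq' Finset.univ i (fun _ => MvPolynomial.pderiv i Q),
    if_pos (Finset.mem_univ i)]

noncomputable def Ig {d : ℕ} (Q : MvPolynomial (Fin d) ℝ) : ℝ := ∫ x, eval x Q ∂(γd d)

lemma Ig_add (A B : MvPolynomial (Fin d) ℝ) : Ig (A + B) = Ig A + Ig B := by
  simp only [Ig, map_add]
  exact integral_add (integrable_eval A) (integrable_eval B)

lemma Ig_sub (A B : MvPolynomial (Fin d) ℝ) : Ig (A - B) = Ig A - Ig B := by
  simp only [Ig, map_sub]
  exact integral_sub (integrable_eval A) (integrable_eval B)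

lemma Ig_sum {ι : Type*} (s : Finset ι) (f : ι → MvPolynomial (Fin d) ℝ) :
    Ig (∑ i ∈ s, f i) = ∑ i ∈ s, Ig (f i) := by
  simp only [Ig, map_sum]
  exact integral_finset_sum s (fun i _ => integrable_eval (f i))

lemma Ig_smul (c : ℝ) (A : MvPolynomial (Fin d) ℝ) : Ig (C c * A) = c * Ig A := by
  simp only [Ig]
  rw [← integral_const_mul]
  congr 1; funext x; simp

lemma Ig_zero : Ig (0 : MvPolynomial (Fin d) ℝ) = 0 := by simp [Ig]

lemma Ig_sq_nonneg (A : MvPolynomial (Fin d) ℝ) : 0 ≤ Ig (A * A) := by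
  rw [Ig]
  refine integral_nonneg (fun x => ?_)
  simp only [map_mul]
  exact mul_self_nonneg _

lemma ibp (P Q : MvPolynomial (Fin d) ℝ) :
    Ig (P * Lpoly Q) = ∑ i : Fin d, Ig (pderiv i P * pderiv i Q) := by
  have hsplit : P * Lpoly Q
      = ∑ i : Fin d, (X i * (P * pderiv i Q) - P * pderiv i (pderiv i Q)) := by
    rw [Lpoly, Finset.mul_sum]
    exact Finset.sum_congr rfl (fun i _ => by ring)
  rw [hsplit, Ig_sum]
  refine Finset.sum_congr rfl (fun i _ => ?_)
  rw [Ig_sub, Ig, stein_d i (P * pderiv i Q), pderiv_mul, ← Ig]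
  rw [Ig_add]
  ring

lemma totalDegree_pderiv_le {m : ℕ} (i : Fin d) (Q : MvPolynomial (Fin d) ℝ)
    (hQ : Q.totalDegree ≤ m + 1) : (pderiv i Q).totalDegree ≤ m := by
  conv_lhs => rw [Q.as_sum]
  rw [map_sum]
  refine totalDegree_finsetSum_le (fun α hα => ?_)
  rw [pderiv_monomial]
  by_cases hzero : Q.coeff α * (α i) = 0
  · rw [hzero, monomial_zero]
    exact Nat.zero_le m
  · rw [totalDegree_monomial _ hzero]
    have hαi : 1 ≤ α i := by
      rcases Nat.eq_zero_or_pos (α i) with h | h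
      · exact absurd (by rw [h]; ring) hzero
      · exact h
    have hsum : ((α - Finsupp.single i 1 : Fin d →₀ ℕ).sum fun _ e => e)
        = (α.sum fun _ e => e) - 1 := by
      rw [Finsupp.sum_fintype _ _ (fun _ => rfl), Finsupp.sum_fintype _ _ (fun _ => rfl)]
      rw [← Finset.add_sum_erase Finset.univ _ (Finset.mem_univ i),
          ← Finset.add_sum_erase Finset.univ (fun j => α j) (Finset.mem_univ i)]
      have : ∑ j ∈ Finset.univ.erase i, (α - Finsupp.single i 1 : Fin d →₀ ℕ) j
          = ∑ j ∈ Finset.univ.erase i, α j := by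
        refine Finset.sum_congr rfl (fun j hj => ?_)
        rw [Finsupp.tsub_apply, Finsupp.single_eq_of_ne' (Ne.symm (Finset.ne_of_mem_erase hj)),
          Nat.sub_zero]
      rw [this, Finsupp.tsub_apply, Finsupp.single_eq_same]
      omega
    have hle := MvPolynomial.le_totalDegree hα
    rw [hsum]
    omega

lemma Ig_CS (f g : MvPolynomial (Fin d) ℝ) :
    (Ig (f * g)) ^ 2 ≤ Ig (f * f) * Ig (g * g) := by
  set A := Ig (f * f) with hA
  set D := Ig (f * g) with hD
  set Cc := Ig (g * g) with hC
  have hA0 : 0 ≤ A := Ig_sq_nonneg f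
  have hC0 : 0 ≤ Cc := Ig_sq_nonneg g
  have key : ∀ t : ℝ, 0 ≤ A + 2 * t * D + t ^ 2 * Cc := by
    intro t
    have h0 : 0 ≤ ∫ x, (eval x f + t * eval x g) ^ 2 ∂(γd d) :=
      integral_nonneg (fun x => sq_nonneg _)
    have heq : ∫ x, (eval x f + t * eval x g) ^ 2 ∂(γd d)
        = A + 2 * t * D + t ^ 2 * Cc := by
      have hfun : (fun x : Fin d → ℝ => (eval x f + t * eval x g) ^ 2)
          = fun x => eval x (f * f + (C (2*t) * (f * g) + C (t^2) * (g * g))) := by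
        funext x; simp only [map_add, map_mul, eval_C]; ring
      rw [hfun, ← Ig, Ig_add, Ig_add, Ig_smul, Ig_smul, hA, hD, hC]
      ring
    linarith [heq ▸ h0]
  rcases eq_or_lt_of_le hC0 with hC1 | hC1
  · by_cases hD0 : D = 0
    · rw [hD0]; nlinarith
    · exfalso
      have h3 : 2 * (-(A+1)/(2*D)) * D = -(A+1) := by field_simp
      have h4 := key (-(A+1)/(2*D))
      rw [h3, ← hC1, mul_zero] at h4
      linarith
  · have h5 := key (-D/Cc)
    have h2 : A + 2 * (-D/Cc) * D + (-D/Cc)^2 * Cc = A - D^2/Cc := by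
      field_simp; ring
    rw [h2] at h5
    have h6 : D^2/Cc ≤ A := by linarith
    calc D^2 = (D^2/Cc) * Cc := by field_simp
      _ ≤ A * Cc := mul_le_mul_of_nonneg_right h6 hC0

lemma pderiv_of_deg_zero (i : Fin d) (Q : MvPolynomial (Fin d) ℝ)
    (hQ : Q.totalDegree = 0) : pderiv i Q = 0 := by
  have h := (totalDegree_eq_zero_iff (Fin d) Q).mp hQ
  conv_lhs => rw [Q.as_sum]
  rw [map_sum]
  refine Finset.sum_eq_zero (fun α hα => ?_)
  simp [pderiv_monomial, h α hα i]

lemma main_ind : ∀ m : ℕ, ∀ Q : MvPolynomial (Fin d) ℝ, Q.totalDegree ≤ m →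
    ∑ i : Fin d, Ig (pderiv i Q * pderiv i Q) ≤ m * Ig (Q * Q) := by
  intro m
  induction m with
  | zero =>
    intro Q hQ
    have h0 : ∀ i : Fin d, pderiv i Q = 0 :=
      fun i => pderiv_of_deg_zero i Q (Nat.le_zero.mp hQ)
    simp [h0, Ig_zero]
  | succ m ih =>
    intro Q hQ
    set A := ∑ i : Fin d, Ig (pderiv i Q * pderiv i Q) with hA
    set B := Ig (Q * Q) with hB
    have hA_eq : Ig (Q * Lpoly Q) = A := ibp Q Q
    have hA0 : 0 ≤ A := Finset.sum_nonneg (fun i _ => Ig_sq_nonneg _)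
    have hB0 : 0 ≤ B := Ig_sq_nonneg _
    have hL2 : Ig (Lpoly Q * Lpoly Q) ≤ (m + 1) * A := by
      rw [ibp (Lpoly Q) Q]
      have hterm : ∀ i : Fin d, Ig (pderiv i (Lpoly Q) * pderiv i Q)
          = Ig (pderiv i Q * Lpoly (pderiv i Q)) + Ig (pderiv i Q * pderiv i Q) := by
        intro i
        rw [pderiv_Lpoly]
        have : (Lpoly (pderiv i Q) + pderiv i Q) * pderiv i Q
            = pderiv i Q * Lpoly (pderiv i Q) + pderiv i Q * pderiv i Q := by ring
        rw [this, Ig_add]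
      rw [Finset.sum_congr rfl (fun i _ => hterm i), Finset.sum_add_distrib]
      have hIH : ∀ i : Fin d, Ig (pderiv i Q * Lpoly (pderiv i Q))
          ≤ m * Ig (pderiv i Q * pderiv i Q) := by
        intro i
        rw [ibp (pderiv i Q) (pderiv i Q)]
        exact ih (pderiv i Q) (totalDegree_pderiv_le i Q hQ)
      calc (∑ i : Fin d, Ig (pderiv i Q * Lpoly (pderiv i Q)))
            + ∑ i : Fin d, Ig (pderiv i Q * pderiv i Q)
          ≤ (∑ i : Fin d, m * Ig (pderiv i Q * pderiv i Q)) + A :=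
            add_le_add (Finset.sum_le_sum (fun i _ => hIH i)) le_rfl
        _ = (m + 1) * A := by rw [← Finset.mul_sum, ← hA]; ring
    have hCS := Ig_CS Q (Lpoly Q)
    rw [hA_eq] at hCS
    have hA2 : A ^ 2 ≤ B * ((m + 1) * A) := by
      calc A ^ 2 ≤ B * Ig (Lpoly Q * Lpoly Q) := hCS
        _ ≤ B * ((m + 1) * A) := mul_le_mul_of_nonneg_left hL2 hB0
    rcases eq_or_lt_of_le hA0 with hA1 | hA1
    · rw [← hA1]
      positivity
    · have hfin : A ≤ (m + 1) * B := by nlinarith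
      calc A ≤ (m+1) * B := hfin
        _ = (↑(m+1) : ℝ) * B := by push_cast; ring

lemma std_eq (d : ℕ) (f : EuclideanSpace ℝ (Fin d) → ℝ) :
    ∫ x, f x ∂(stdGaussian d) = ∫ x, f (WithLp.toLp 2 x) ∂(γd d) := by
  rw [_root_.stdGaussian]
  exact integral_map_equiv (MeasurableEquiv.toLp 2 (Fin d → ℝ)) f

end AuxMulti
/- ===== end auxiliary development ===== -/

/-- Gaussian Poincaré-type inequality for low-degree polynomials:
the expected squared gradient norm is at most the degree times the second moment. -/
theorem gradient_norm_bound_polynomial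
    (d k : ℕ) (hd : 1 ≤ d) (hk : 1 ≤ k)
    (P : MvPolynomial (Fin d) ℝ) (hdeg : P.totalDegree ≤ k) :
    ∫ x, ‖gradP P x‖ ^ 2 ∂(stdGaussian d) ≤
      (k : ℝ) * ∫ x, (evalP P x) ^ 2 ∂(stdGaussian d) := by
    classical
  have h1 : ∫ x, ‖gradP P x‖ ^ 2 ∂(stdGaussian d)
      = ∑ i : Fin d, Ig (MvPolynomial.pderiv i P * MvPolynomial.pderiv i P) := by
    rw [std_eq d (fun x => ‖gradP P x‖ ^ 2)]
    have hfun : (fun x : Fin d → ℝ => ‖gradP P (WithLp.toLp 2 x)‖ ^ 2)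
        = fun x : Fin d → ℝ => ∑ i : Fin d,
            MvPolynomial.eval x (MvPolynomial.pderiv i P * MvPolynomial.pderiv i P) := by
      funext x
      rw [EuclideanSpace.norm_eq, Real.sq_sqrt (by positivity)]
      refine Finset.sum_congr rfl (fun i _ => ?_)
      have hg : gradP P (WithLp.toLp 2 x) i = MvPolynomial.eval x (MvPolynomial.pderiv i P) := rfl
      rw [map_mul, Real.norm_eq_abs, sq_abs, hg, sq]
    refine Eq.trans (congrArg (fun f : (Fin d → ℝ) → ℝ => ∫ x, f x ∂(γd d)) hfun) ?_
    exact integral_finset_sum _ (fun i _ => integrable_eval _)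
  have h2 : ∫ x, (evalP P x) ^ 2 ∂(stdGaussian d) = Ig (P * P) := by
    rw [std_eq d (fun x => evalP P x ^ 2), Ig]
    congr 1
    funext x
    rw [map_mul, sq]
    rfl
  rw [h1, h2]
  exact main_ind k P hdeg
end

section
/- There exist universal constants c ∈ (0,1) and C > 0 such that the following holds. Let w₀, w ∈ ℝ^d be unit vectors, σ ∈ (0,1), α ∈ (0, c), and t ∈ ℝ with |t| ≤ c·σ·α and θ(w₀, w) ≤ c·σ·α. Set h(x) = sign(w₀·x) and h'(x) = sign(w·x + t). Then E_{x~N(0,I_d)}[ 1{h(x) ≠ h'(x)} · (1 − exp(−(w₀·x)²·(σ^{−2} − 1)/2)) ] ≤ C·σ·α². -/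
open MeasureTheory ProbabilityTheory Real
open scoped RealInnerProductSpace

open scoped ENNReal NNReal

namespace LocAux

lemma map_withDensity {α β : Type*} [MeasurableSpace α] [MeasurableSpace β]
    (e : α ≃ᵐ β) (μ : Measure α) (h : β → ℝ≥0∞) (hh : Measurable h) :
    (μ.map e).withDensity h = (μ.withDensity (h ∘ e)).map e := by
  ext s hs
  rw [withDensity_apply _ hs, Measure.map_apply e.measurable hs,
      withDensity_apply _ (e.measurable hs), setLIntegral_map hs hh e.measurable]
  rfl

lemma prod_withDensity {α β : Type*} [MeasurableSpace α] [MeasurableSpace β]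
    (μ : Measure α) (ν : Measure β) [SigmaFinite μ] [SigmaFinite ν]
    (f : α → ℝ≥0∞) (g : β → ℝ≥0∞) (hf : Measurable f) (hg : Measurable g)
    [SigmaFinite (μ.withDensity f)] [SigmaFinite (ν.withDensity g)] :
    (μ.withDensity f).prod (ν.withDensity g)
      = (μ.prod ν).withDensity (fun z => f z.1 * g z.2) := by
  refine Measure.prod_eq fun s t hs ht => ?_
  rw [withDensity_apply _ (hs.prod ht), ← Measure.prod_restrict,
      lintegral_prod_mul hf.aemeasurable hg.aemeasurable,
      withDensity_apply _ hs, withDensity_apply _ ht]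

lemma gauss_eq_withDensity : gaussianReal 0 1 = (volume : Measure ℝ).withDensity (gaussianPDF 0 1) := by
  rw [gaussianReal, if_neg one_ne_zero]

lemma pi_gauss : ∀ n : ℕ, (Measure.pi fun _ : Fin n => gaussianReal 0 1)
    = (Measure.pi fun _ : Fin n => (volume : Measure ℝ)).withDensity
        (fun y => ∏ i, gaussianPDF 0 1 (y i)) := by
  intro n
  induction n with
  | zero =>
      rw [Measure.pi_of_empty, Measure.pi_of_empty (fun _ : Fin 0 => (volume : Measure ℝ))]
      simp [withDensity_one]
  | succ n ih =>
      set e := MeasurableEquiv.piFinSuccAbove (fun _ : Fin (n+1) => ℝ) 0 with he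
      have h1 : (Measure.pi fun _ : Fin (n+1) => gaussianReal 0 1)
          = ((gaussianReal 0 1).prod (Measure.pi fun _ : Fin n => gaussianReal 0 1)).map e.symm := by
        rw [← (measurePreserving_piFinSuccAbove (fun _ : Fin (n+1) => gaussianReal 0 1) 0).map_eq,
          MeasurableEquiv.map_symm_map]
      have h2 : ((volume : Measure ℝ).prod (Measure.pi fun _ : Fin n => (volume : Measure ℝ)))
          = (Measure.pi fun _ : Fin (n+1) => (volume : Measure ℝ)).map e :=
        (measurePreserving_piFinSuccAbove (fun _ : Fin (n+1) => (volume : Measure ℝ)) 0).map_eq.symm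
      have hgm : Measurable (gaussianPDF 0 1) := measurable_gaussianPDF 0 1
      have hFm : Measurable (fun y : Fin n → ℝ => ∏ i, gaussianPDF 0 1 (y i)) :=
        Finset.measurable_prod _ fun i _ => hgm.comp (measurable_pi_apply i)
      haveI i1 : SigmaFinite ((volume : Measure ℝ).withDensity (gaussianPDF 0 1)) := by
        rw [← gauss_eq_withDensity]; infer_instance
      haveI i2 : SigmaFinite ((Measure.pi fun _ : Fin n => (volume : Measure ℝ)).withDensity
          fun y => ∏ i, gaussianPDF 0 1 (y i)) := by
        rw [← ih]; infer_instance
      rw [h1, ih, gauss_eq_withDensity, prod_withDensity _ _ _ _ hgm hFm, h2,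
        map_withDensity e _ _ (show Measurable fun z : ℝ × (Fin n → ℝ) =>
          gaussianPDF 0 1 z.1 * ∏ i, gaussianPDF 0 1 (z.2 i) from
          (hgm.comp measurable_fst).mul (hFm.comp measurable_snd)),
        MeasurableEquiv.map_symm_map]
      congr 1
      funext y
      have : ∀ i : Fin (n+1), True := fun _ => trivial
      simp only [Function.comp_apply, MeasurableEquiv.piFinSuccAbove_apply]
      rw [Fin.prod_univ_succAbove (fun i => gaussianPDF 0 1 (y i)) 0]
      rfl


noncomputable def gaussDen (d : ℕ) (x : EuclideanSpace ℝ (Fin d)) : ℝ≥0∞ :=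
  ENNReal.ofReal ((Real.sqrt (2 * π))⁻¹ ^ d * Real.exp (-‖x‖ ^ 2 / 2))

lemma measurable_gaussDen (d : ℕ) : Measurable (gaussDen d) := by
  apply Measurable.ennreal_ofReal
  exact (continuous_const.mul (((continuous_norm.pow 2).neg.div_const 2).rexp)).measurable

lemma stdGaussian_eq_withDensity (d : ℕ) :
    stdGaussian d
      = (volume : Measure (EuclideanSpace ℝ (Fin d))).withDensity (gaussDen d) := by
  set mE := (MeasurableEquiv.toLp 2 (Fin d → ℝ)).symm with hmE
  have hFm : Measurable (fun y : Fin d → ℝ => ∏ i, gaussianPDF 0 1 (y i)) :=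
    Finset.measurable_prod _ fun i _ => (measurable_gaussianPDF 0 1).comp (measurable_pi_apply i)
  have hvol : (Measure.pi fun _ : Fin d => (volume : Measure ℝ))
      = (volume : Measure (EuclideanSpace ℝ (Fin d))).map mE := by
    rw [← volume_pi, (EuclideanSpace.volume_preserving_symm_measurableEquiv_toLp (Fin d)).map_eq]
  have hden : (fun y : Fin d → ℝ => ∏ i, gaussianPDF 0 1 (y i)) ∘ ⇑mE = gaussDen d := by
    funext x
    have hcoord : ∀ i, (mE x) i = x i := fun i => rfl
    simp only [Function.comp_apply, hcoord]
    unfold gaussDen gaussianPDF gaussianPDFReal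
    rw [← ENNReal.ofReal_prod_of_nonneg]
    · congr 1
      rw [Finset.prod_mul_distrib, Finset.prod_const, ← Real.exp_sum]
      have hn : ‖x‖ ^ 2 = ∑ i, x i ^ 2 := by
        rw [EuclideanSpace.norm_eq,
          Real.sq_sqrt (Finset.sum_nonneg fun i _ => sq_nonneg ‖x i‖)]
        simp [sq_abs]
      congr 1
      · norm_num
      · rw [hn, ← Finset.sum_div, ← Finset.sum_neg_distrib]
        norm_num
    · intro i _
      positivity
  have : stdGaussian d = (Measure.pi fun _ : Fin d => gaussianReal 0 1).map mE.symm := rfl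
  rw [this, pi_gauss, hvol, map_withDensity mE _ _ hFm, MeasurableEquiv.map_symm_map, hden]

lemma stdGaussian_map_iso (d : ℕ)
    (L : EuclideanSpace ℝ (Fin d) ≃ₗᵢ[ℝ] EuclideanSpace ℝ (Fin d)) :
    MeasurePreserving L (stdGaussian d) (stdGaussian d) := by
  set eL := L.toHomeomorph.toMeasurableEquiv with heL
  have hcoe : ⇑eL = ⇑L := rfl
  refine ⟨L.continuous.measurable, ?_⟩
  have hden : gaussDen d = gaussDen d ∘ ⇑eL := by
    funext x
    simp only [Function.comp_apply, gaussDen, hcoe]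
    rw [L.norm_map]
  rw [stdGaussian_eq_withDensity, ← hcoe]
  conv_lhs => rw [hden]
  rw [← map_withDensity eL _ _ (measurable_gaussDen d)]
  have hvol : (volume : Measure (EuclideanSpace ℝ (Fin d))).map ⇑eL = volume := by
    rw [hcoe]; exact L.measurePreserving.map_eq
  rw [hvol]

lemma lint_pi_one (n : ℕ) (H : ℝ → ℝ≥0∞) (hH : Measurable H) :
    ∫⁻ z, H (z 0) ∂(Measure.pi fun _ : Fin (n+1) => gaussianReal 0 1)
      = ∫⁻ u, H u ∂(gaussianReal 0 1) := by
  set e := MeasurableEquiv.piFinSuccAbove (fun _ : Fin (n+1) => ℝ) 0 with he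
  have mp := measurePreserving_piFinSuccAbove (fun _ : Fin (n+1) => gaussianReal 0 1) 0
  have h1 : ∫⁻ z, H (z 0) ∂(Measure.pi fun _ : Fin (n+1) => gaussianReal 0 1)
      = ∫⁻ p, H p.1
          ∂((gaussianReal 0 1).prod (Measure.pi fun _ : Fin n => gaussianReal 0 1)) := by
    rw [← mp.map_eq, lintegral_map
      (show Measurable fun p : ℝ × (Fin n → ℝ) => H p.1 from hH.comp measurable_fst)
      e.measurable]
    simp [he, MeasurableEquiv.piFinSuccAbove_apply]
  rw [h1, lintegral_prod _
    (show Measurable fun p : ℝ × (Fin n → ℝ) => H p.1 from hH.comp measurable_fst).aemeasurable]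
  simp

lemma lint_pi_two (n : ℕ) (H : ℝ → ℝ → ℝ≥0∞)
    (hH : Measurable fun p : ℝ × ℝ => H p.1 p.2) :
    ∫⁻ z, H (z 0) (z 1) ∂(Measure.pi fun _ : Fin (n+2) => gaussianReal 0 1)
      = ∫⁻ u, ∫⁻ s, H u s ∂(gaussianReal 0 1) ∂(gaussianReal 0 1) := by
  set e := MeasurableEquiv.piFinSuccAbove (fun _ : Fin (n+2) => ℝ) 0 with he
  have mp := measurePreserving_piFinSuccAbove (fun _ : Fin (n+2) => gaussianReal 0 1) 0
  have hG : Measurable fun p : ℝ × (Fin (n+1) → ℝ) => H p.1 (p.2 0) :=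
    hH.comp (measurable_fst.prodMk ((measurable_pi_apply 0).comp measurable_snd))
  have h1 : ∫⁻ z, H (z 0) (z 1) ∂(Measure.pi fun _ : Fin (n+2) => gaussianReal 0 1)
      = ∫⁻ p, H p.1 (p.2 0)
          ∂((gaussianReal 0 1).prod (Measure.pi fun _ : Fin (n+1) => gaussianReal 0 1)) := by
    rw [← mp.map_eq, lintegral_map hG e.measurable]
    simp [he, MeasurableEquiv.piFinSuccAbove_apply, Fin.tail, Fin.zero_succAbove,
      Fin.succ_zero_eq_one]
  rw [h1, lintegral_prod _ hG.aemeasurable]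
  congr 1
  funext u
  exact lint_pi_one n (H u) (hH.comp measurable_prodMk_left)

lemma measurable_coord {d : ℕ} (i : Fin d) :
    Measurable fun x : EuclideanSpace ℝ (Fin d) => x i :=
  (measurable_pi_apply i).comp (MeasurableEquiv.toLp 2 (Fin d → ℝ)).symm.measurable

lemma lint_std_coords (d : ℕ) (G : EuclideanSpace ℝ (Fin d) → ℝ≥0∞) (hG : Measurable G) :
    ∫⁻ x, G x ∂(stdGaussian d)
      = ∫⁻ z : Fin d → ℝ, G ((EuclideanSpace.equiv (Fin d) ℝ).symm z)
          ∂(Measure.pi fun _ : Fin d => gaussianReal 0 1) := by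
  unfold _root_.stdGaussian
  rw [lintegral_map hG (EuclideanSpace.equiv (Fin d) ℝ).symm.continuous.measurable]

lemma lint_std_two (n : ℕ) (a b : EuclideanSpace ℝ (Fin (n+2)))
    (ha : ‖a‖ = 1) (hb : ‖b‖ = 1) (hab : ⟪a, b⟫ = 0)
    (H : ℝ → ℝ → ℝ≥0∞) (hH : Measurable fun p : ℝ × ℝ => H p.1 p.2) :
    ∫⁻ x, H ⟪a, x⟫ ⟪b, x⟫ ∂(stdGaussian (n+2))
      = ∫⁻ u, ∫⁻ s, H u s ∂(gaussianReal 0 1) ∂(gaussianReal 0 1) := by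
  classical
  set v : Fin (n+2) → EuclideanSpace ℝ (Fin (n+2)) := fun i => if i = 0 then a else b with hv
  have hv0 : v 0 = a := by simp [hv]
  have hv1 : v 1 = b := by simp [hv]
  have haa : ⟪a, a⟫ = 1 := by
    rw [real_inner_self_eq_norm_sq, ha]; norm_num
  have hbb : ⟪b, b⟫ = 1 := by
    rw [real_inner_self_eq_norm_sq, hb]; norm_num
  have hba : ⟪b, a⟫ = 0 := by rw [real_inner_comm, hab]
  have hortho : Orthonormal ℝ (({0, 1} : Set (Fin (n+2))).restrict v) := by
    rw [orthonormal_iff_ite]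
    rintro ⟨i, hi⟩ ⟨j, hj⟩
    simp only [Set.mem_insert_iff, Set.mem_singleton_iff] at hi hj
    rcases hi with rfl | rfl <;> rcases hj with rfl | rfl <;>
      simp only [Set.restrict, Set.domRestrict_apply, hv0, hv1, haa, hbb, hab, hba, Subtype.ext_iff] <;>
      norm_num
  have hcard : Module.finrank ℝ (EuclideanSpace ℝ (Fin (n+2))) = Fintype.card (Fin (n+2)) := by
    simp [finrank_euclideanSpace]
  obtain ⟨B, hB⟩ := hortho.exists_orthonormalBasis_extension_of_card_eq hcard
  have hB0 : B 0 = a := by rw [hB 0 (by simp), hv0]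
  have hB1 : B 1 = b := by rw [hB 1 (by simp), hv1]
  have hGm : Measurable fun y : EuclideanSpace ℝ (Fin (n+2)) => H (y 0) (y 1) :=
    hH.comp ((measurable_coord 0).prodMk (measurable_coord 1))
  have step1 : ∫⁻ x, H ⟪a, x⟫ ⟪b, x⟫ ∂(stdGaussian (n+2))
      = ∫⁻ y, H (y 0) (y 1) ∂(stdGaussian (n+2)) := by
    rw [← (stdGaussian_map_iso (n+2) B.repr).lintegral_comp hGm]
    congr 1
    funext x
    have h0 : (B.repr x) 0 = ⟪a, x⟫ := by rw [B.repr_apply_apply, hB0]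
    have h1 : (B.repr x) 1 = ⟪b, x⟫ := by rw [B.repr_apply_apply, hB1]
    simp [Function.comp, h0, h1]
  rw [step1, lint_std_coords _ _ hGm, ← lint_pi_two n H hH]
  rfl

lemma lint_std_one (n : ℕ) (a : EuclideanSpace ℝ (Fin (n+1))) (ha : ‖a‖ = 1)
    (H : ℝ → ℝ≥0∞) (hH : Measurable H) :
    ∫⁻ x, H ⟪a, x⟫ ∂(stdGaussian (n+1)) = ∫⁻ u, H u ∂(gaussianReal 0 1) := by
  classical
  set v : Fin (n+1) → EuclideanSpace ℝ (Fin (n+1)) := fun _ => a with hv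
  have haa : ⟪a, a⟫ = 1 := by
    rw [real_inner_self_eq_norm_sq, ha]; norm_num
  have hortho : Orthonormal ℝ (({0} : Set (Fin (n+1))).restrict v) := by
    rw [orthonormal_iff_ite]
    rintro ⟨i, hi⟩ ⟨j, hj⟩
    simp only [Set.mem_singleton_iff] at hi hj
    subst hi; subst hj
    simp only [Set.restrict, Set.domRestrict_apply, hv, haa]
    norm_num
  have hcard : Module.finrank ℝ (EuclideanSpace ℝ (Fin (n+1))) = Fintype.card (Fin (n+1)) := by
    simp [finrank_euclideanSpace]
  obtain ⟨B, hB⟩ := hortho.exists_orthonormalBasis_extension_of_card_eq hcard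
  have hB0 : B 0 = a := by rw [hB 0 (by simp), hv]
  have hGm : Measurable fun y : EuclideanSpace ℝ (Fin (n+1)) => H (y 0) :=
    hH.comp (measurable_coord 0)
  have step1 : ∫⁻ x, H ⟪a, x⟫ ∂(stdGaussian (n+1))
      = ∫⁻ y, H (y 0) ∂(stdGaussian (n+1)) := by
    rw [← (stdGaussian_map_iso (n+1) B.repr).lintegral_comp hGm]
    congr 1
    funext x
    have h0 : (B.repr x) 0 = ⟪a, x⟫ := by rw [B.repr_apply_apply, hB0]
    simp [Function.comp, h0]
  rw [step1, lint_std_coords _ _ hGm, ← lint_pi_one n H hH]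
  rfl

instance (d : ℕ) : IsProbabilityMeasure (stdGaussian d) := by
  unfold _root_.stdGaussian
  exact Measure.isProbabilityMeasure_map
    (EuclideanSpace.equiv (Fin d) ℝ).symm.continuous.measurable.aemeasurable

lemma sqrt_two_pi_ge_two : (2 : ℝ) ≤ Real.sqrt (2 * π) := by
  nlinarith [Real.sq_sqrt (show (0:ℝ) ≤ 2 * π by positivity),
    Real.sqrt_nonneg (2 * π), Real.pi_gt_three,
    sq_nonneg (Real.sqrt (2 * π) - 2), sq_nonneg (Real.sqrt (2 * π) + 2)]

lemma gaussianPDFReal_le_half (u : ℝ) : gaussianPDFReal 0 1 u ≤ 2⁻¹ := by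
  unfold gaussianPDFReal
  have h1 : Real.exp (-(u - 0) ^ 2 / (2 * 1)) ≤ 1 := by
    apply Real.exp_le_one_iff.2
    nlinarith [sq_nonneg u]
  have h2 : (Real.sqrt (2 * π * 1))⁻¹ ≤ 2⁻¹ := by
    apply inv_anti₀ (by norm_num)
    rw [mul_one]
    exact sqrt_two_pi_ge_two
  have h3 : (0:ℝ) < Real.sqrt (2 * π * 1) := by
    rw [mul_one]
    exact lt_of_lt_of_le (by norm_num) sqrt_two_pi_ge_two
  calc (Real.sqrt (2 * π * 1))⁻¹ * Real.exp (-(u - 0) ^ 2 / (2 * 1))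
      ≤ (Real.sqrt (2 * π * 1))⁻¹ * 1 := by
        exact mul_le_mul_of_nonneg_left h1 (by positivity)
    _ ≤ 2⁻¹ := by rw [mul_one]; exact h2

lemma gauss_abs_le (r : ℝ) (hr : 0 ≤ r) :
    gaussianReal 0 1 {u : ℝ | |u| ≤ r} ≤ ENNReal.ofReal r := by
  have hset : {u : ℝ | |u| ≤ r} = Set.Icc (-r) r := by
    ext u; simp [abs_le]
  rw [hset, gauss_eq_withDensity, withDensity_apply _ measurableSet_Icc]
  calc ∫⁻ u in Set.Icc (-r) r, gaussianPDF 0 1 u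
      ≤ ∫⁻ _ in Set.Icc (-r) r, ENNReal.ofReal 2⁻¹ := by
        refine setLIntegral_mono measurable_const fun u _ => ?_
        exact ENNReal.ofReal_le_ofReal (gaussianPDFReal_le_half u)
    _ = ENNReal.ofReal 2⁻¹ * volume (Set.Icc (-r) r) := by
        rw [setLIntegral_const]
    _ ≤ ENNReal.ofReal r := by
        rw [Real.volume_Icc, ← ENNReal.ofReal_mul (by norm_num)]
        exact ENNReal.ofReal_le_ofReal (by nlinarith)

lemma inner_bound (τ K : ℝ) (hτ : 0 ≤ τ) (hK : 0 ≤ K) :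
    ∫⁻ u, (if |u| ≤ τ then ENNReal.ofReal (u ^ 2 * K) else 0) ∂(gaussianReal 0 1)
      ≤ ENNReal.ofReal (τ ^ 3 * K) := by
  have hpt : ∀ u : ℝ, (if |u| ≤ τ then ENNReal.ofReal (u ^ 2 * K) else 0)
      ≤ Set.indicator {u : ℝ | |u| ≤ τ} (fun _ => ENNReal.ofReal (τ ^ 2 * K)) u := by
    intro u
    by_cases h : |u| ≤ τ
    · rw [if_pos h, Set.indicator_of_mem (by exact h)]
      apply ENNReal.ofReal_le_ofReal
      apply mul_le_mul_of_nonneg_right _ hK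
      calc u ^ 2 = |u| ^ 2 := (sq_abs u).symm
        _ ≤ τ ^ 2 := by nlinarith [abs_nonneg u]
    · rw [if_neg h]; exact zero_le
  have hset : MeasurableSet {u : ℝ | |u| ≤ τ} := by
    have : {u : ℝ | |u| ≤ τ} = Set.Icc (-τ) τ := by ext u; simp [abs_le]
    rw [this]; exact measurableSet_Icc
  calc ∫⁻ u, (if |u| ≤ τ then ENNReal.ofReal (u ^ 2 * K) else 0) ∂(gaussianReal 0 1)
      ≤ ∫⁻ u, Set.indicator {u : ℝ | |u| ≤ τ} (fun _ => ENNReal.ofReal (τ ^ 2 * K)) u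
          ∂(gaussianReal 0 1) := lintegral_mono hpt
    _ = ENNReal.ofReal (τ ^ 2 * K) * gaussianReal 0 1 {u : ℝ | |u| ≤ τ} := by
        rw [lintegral_indicator hset, setLIntegral_const]
    _ ≤ ENNReal.ofReal (τ ^ 2 * K) * ENNReal.ofReal τ :=
        mul_le_mul_right (gauss_abs_le τ hτ) _
    _ = ENNReal.ofReal (τ ^ 3 * K) := by
        rw [← ENNReal.ofReal_mul (by positivity)]
        ring_nf

lemma abs_cube_le (s : ℝ) : |s| ^ 3 ≤ 8 * Real.exp (s ^ 2 / 4) := by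
  have h1 : s ^ 2 / 8 + 1 ≤ Real.exp (s ^ 2 / 8) := Real.add_one_le_exp _
  have h2 : Real.exp (s ^ 2 / 4) = Real.exp (s ^ 2 / 8) * Real.exp (s ^ 2 / 8) := by
    rw [← Real.exp_add]; ring_nf
  have h3 : (1 + s ^ 2 / 8) ^ 2 ≤ Real.exp (s ^ 2 / 4) := by
    rw [h2]
    have h0 : (0:ℝ) ≤ 1 + s ^ 2 / 8 := by positivity
    nlinarith [sq_nonneg s]
  have h4 : |s| ^ 3 ≤ 8 * (1 + s ^ 2 / 8) ^ 2 := by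
    have hs : |s| ^ 2 = s ^ 2 := sq_abs s
    nlinarith [sq_nonneg (|s| * (|s| - 4)), abs_nonneg s, sq_nonneg (|s| - 4)]
  nlinarith
  
lemma moment3 : ∫⁻ s, ENNReal.ofReal (|s| ^ 3) ∂(gaussianReal 0 1) ≤ ENNReal.ofReal 15 := by
  rw [gauss_eq_withDensity,
    lintegral_withDensity_eq_lintegral_mul _ (measurable_gaussianPDF 0 1)
      (by measurability)]
  have hpt : ∀ s : ℝ, (gaussianPDF 0 1 * fun s => ENNReal.ofReal (|s| ^ 3)) s
      ≤ ENNReal.ofReal (4 * Real.exp (-(4⁻¹) * s ^ 2)) := by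
    intro s
    simp only [Pi.mul_apply, gaussianPDF]
    rw [← ENNReal.ofReal_mul (gaussianPDFReal_nonneg 0 1 s)]
    apply ENNReal.ofReal_le_ofReal
    have hb : gaussianPDFReal 0 1 s ≤ 2⁻¹ * Real.exp (-(s ^ 2) / 2) := by
      unfold gaussianPDFReal
      have h2 : (Real.sqrt (2 * π * (1:NNReal)))⁻¹ ≤ 2⁻¹ := by
        apply inv_anti₀ (by norm_num)
        push_cast
        rw [mul_one]; exact sqrt_two_pi_ge_two
      have h3 : -(s - 0) ^ 2 / (2 * ((1:NNReal):ℝ)) = -(s ^ 2) / 2 := by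
        push_cast; ring
      rw [h3]
      exact mul_le_mul_of_nonneg_right h2 (Real.exp_nonneg _)
    calc gaussianPDFReal 0 1 s * |s| ^ 3
        ≤ (2⁻¹ * Real.exp (-(s ^ 2) / 2)) * (8 * Real.exp (s ^ 2 / 4)) := by
          apply mul_le_mul hb (abs_cube_le s) (by positivity)
          positivity
      _ = 4 * Real.exp (-(4⁻¹) * s ^ 2) := by
          rw [mul_mul_mul_comm, ← Real.exp_add]
          norm_num
          ring_nf
  calc ∫⁻ s, (gaussianPDF 0 1 * fun s => ENNReal.ofReal (|s| ^ 3)) s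
      ≤ ∫⁻ s, ENNReal.ofReal (4 * Real.exp (-(4⁻¹) * s ^ 2)) := lintegral_mono hpt
    _ = ENNReal.ofReal (∫ s, 4 * Real.exp (-(4⁻¹) * s ^ 2)) := by
        rw [← ofReal_integral_eq_lintegral_ofReal
          ((integrable_exp_neg_mul_sq (by norm_num : (0:ℝ) < 4⁻¹)).const_mul 4)
          (Filter.Eventually.of_forall fun s => by positivity)]
    _ ≤ ENNReal.ofReal 15 := by
        apply ENNReal.ofReal_le_ofReal
        rw [MeasureTheory.integral_const_mul, integral_gaussian]
        have hs : Real.sqrt (π / 4⁻¹) ≤ 15/4 := by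
          rw [show (15/4:ℝ) = Real.sqrt ((15/4)^2) from
            (Real.sqrt_sq (by norm_num)).symm]
          apply Real.sqrt_le_sqrt
          rw [show π / 4⁻¹ = 4 * π by field_simp]
          nlinarith [Real.pi_lt_d2]
        linarith

lemma sgn_diff_bound {u r : ℝ} (h : sgn u ≠ sgn r) : |u| ≤ |u - r| := by
  unfold sgn at h
  by_cases hu : 0 ≤ u
  · rw [if_pos hu] at h
    by_cases hr : 0 ≤ r
    · rw [if_pos hr] at h; exact absurd rfl h
    · push_neg at hr
      rw [abs_of_nonneg hu, abs_of_nonneg (by linarith)]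
      linarith
  · push_neg at hu
    rw [if_neg (not_le.2 hu)] at h
    by_cases hr : 0 ≤ r
    · rw [abs_of_neg hu, abs_of_nonpos (by linarith)]
      linarith
    · rw [if_neg hr] at h; exact absurd rfl h

lemma one_sub_exp_le {y z : ℝ} (hy : 0 ≤ y) (hyz : y ≤ z) : 1 - Real.exp (-y) ≤ z := by
  have := Real.add_one_le_exp (-y)
  linarith

lemma cube_sum_bound {a b : ℝ} (ha : 0 ≤ a) (hb : 0 ≤ b) :
    (2 * a + 2 * b) ^ 3 ≤ 32 * a ^ 3 + 32 * b ^ 3 := by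
  nlinarith [sq_nonneg (a - b), sq_nonneg (a + b), mul_nonneg ha hb,
    mul_nonneg (mul_nonneg ha ha) hb, mul_nonneg (mul_nonneg hb hb) ha]

/-- The inner-then-outer estimate: expectation of the conditional bound. -/
lemma outer_bound (c₂ t K : ℝ) (hc₂ : 0 ≤ c₂) (hK : 0 ≤ K) :
    ∫⁻ s, ENNReal.ofReal ((2 * c₂ * |s| + 2 * |t|) ^ 3 * K) ∂(gaussianReal 0 1)
      ≤ ENNReal.ofReal (480 * c₂ ^ 3 * K + 32 * |t| ^ 3 * K) := by
  have hpt : ∀ s : ℝ, ENNReal.ofReal ((2 * c₂ * |s| + 2 * |t|) ^ 3 * K)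
      ≤ ENNReal.ofReal (32 * c₂ ^ 3 * K) * ENNReal.ofReal (|s| ^ 3)
        + ENNReal.ofReal (32 * |t| ^ 3 * K) := by
    intro s
    rw [← ENNReal.ofReal_mul (by positivity), ← ENNReal.ofReal_add (by positivity) (by positivity)]
    apply ENNReal.ofReal_le_ofReal
    have h1 : (2 * (c₂ * |s|) + 2 * |t|) ^ 3 ≤ 32 * (c₂ * |s|) ^ 3 + 32 * |t| ^ 3 :=
      cube_sum_bound (by positivity) (abs_nonneg t)
    have h2 : (2 * c₂ * |s| + 2 * |t|) ^ 3 * K ≤ (32 * (c₂ * |s|) ^ 3 + 32 * |t| ^ 3) * K := by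
      apply mul_le_mul_of_nonneg_right _ hK
      calc (2 * c₂ * |s| + 2 * |t|) ^ 3 = (2 * (c₂ * |s|) + 2 * |t|) ^ 3 := by ring
        _ ≤ 32 * (c₂ * |s|) ^ 3 + 32 * |t| ^ 3 := h1
    calc (2 * c₂ * |s| + 2 * |t|) ^ 3 * K ≤ (32 * (c₂ * |s|) ^ 3 + 32 * |t| ^ 3) * K := h2
      _ = 32 * c₂ ^ 3 * K * |s| ^ 3 + 32 * |t| ^ 3 * K := by ring
  calc ∫⁻ s, ENNReal.ofReal ((2 * c₂ * |s| + 2 * |t|) ^ 3 * K) ∂(gaussianReal 0 1)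
      ≤ ∫⁻ s, (ENNReal.ofReal (32 * c₂ ^ 3 * K) * ENNReal.ofReal (|s| ^ 3)
          + ENNReal.ofReal (32 * |t| ^ 3 * K)) ∂(gaussianReal 0 1) := lintegral_mono hpt
    _ = ENNReal.ofReal (32 * c₂ ^ 3 * K) * ∫⁻ s, ENNReal.ofReal (|s| ^ 3) ∂(gaussianReal 0 1)
          + ENNReal.ofReal (32 * |t| ^ 3 * K) * 1 := by
        rw [lintegral_add_right _ measurable_const, lintegral_const,
          lintegral_const_mul _ (by measurability), measure_univ]
    _ ≤ ENNReal.ofReal (32 * c₂ ^ 3 * K) * ENNReal.ofReal 15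
          + ENNReal.ofReal (32 * |t| ^ 3 * K) * 1 := by
        gcongr
        exact moment3
    _ = ENNReal.ofReal (480 * c₂ ^ 3 * K + 32 * |t| ^ 3 * K) := by
        rw [mul_one, ← ENNReal.ofReal_mul (by positivity),
          ← ENNReal.ofReal_add (by positivity) (by positivity)]
        ring_nf

lemma meas_inner {d : ℕ} (w : EuclideanSpace ℝ (Fin d)) :
    Measurable fun x : EuclideanSpace ℝ (Fin d) => ⟪w, x⟫ :=
  (continuous_const.inner continuous_id).measurable

lemma meas_sgn : Measurable sgn :=
  Measurable.ite (measurableSet_le measurable_const measurable_id)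
    measurable_const measurable_const

lemma meas_f {d : ℕ} (w₀ w : EuclideanSpace ℝ (Fin d)) (σ t : ℝ) :
    Measurable fun x : EuclideanSpace ℝ (Fin d) =>
      (if sgn ⟪w₀, x⟫ ≠ sgn (⟪w, x⟫ + t) then (1:ℝ) else 0) *
        (1 - Real.exp (-(⟪w₀, x⟫) ^ 2 * (σ⁻¹ ^ 2 - 1) / 2)) := by
  apply Measurable.mul
  · apply Measurable.ite _ measurable_const measurable_const
    have hm : Measurable fun x : EuclideanSpace ℝ (Fin d) =>
        (sgn ⟪w₀, x⟫, sgn (⟪w, x⟫ + t)) :=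
      (meas_sgn.comp (meas_inner w₀)).prodMk
        (meas_sgn.comp ((meas_inner w).add_const t))
    have hne : MeasurableSet {p : ℝ × ℝ | p.1 ≠ p.2} :=
      (isClosed_eq continuous_fst continuous_snd).measurableSet.compl
    exact hm hne
  · apply Measurable.const_sub
    exact (Real.continuous_exp.measurable).comp
      ((((meas_inner w₀).pow_const 2).neg.mul_const _).div_const 2)

lemma weight_nonneg {u σ : ℝ} (hσ0 : 0 < σ) (hσ1 : σ ≤ 1) :
    0 ≤ 1 - Real.exp (-u ^ 2 * (σ⁻¹ ^ 2 - 1) / 2) := by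
  have hσinv : 1 ≤ σ⁻¹ := by
    have := inv_anti₀ hσ0 hσ1
    simpa using this
  have hsq : 1 ≤ σ⁻¹ ^ 2 := by nlinarith [sq_nonneg (σ⁻¹ - 1)]
  have hexp : -u ^ 2 * (σ⁻¹ ^ 2 - 1) / 2 ≤ 0 := by
    nlinarith [mul_nonneg (sq_nonneg u) (sub_nonneg.2 hsq)]
  have := Real.exp_le_one_iff.2 hexp
  linarith

lemma weight_le {u σ : ℝ} (hσ0 : 0 < σ) (hσ1 : σ ≤ 1) :
    1 - Real.exp (-u ^ 2 * (σ⁻¹ ^ 2 - 1) / 2) ≤ u ^ 2 * (σ⁻¹ ^ 2 / 2) := by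
  have hσinv : 1 ≤ σ⁻¹ := by
    have := inv_anti₀ hσ0 hσ1
    simpa using this
  have hsq : 1 ≤ σ⁻¹ ^ 2 := by nlinarith [sq_nonneg (σ⁻¹ - 1)]
  have hy : (0:ℝ) ≤ u ^ 2 * (σ⁻¹ ^ 2 - 1) / 2 := by
    nlinarith [mul_nonneg (sq_nonneg u) (sub_nonneg.2 hsq)]
  have h1 : -u ^ 2 * (σ⁻¹ ^ 2 - 1) / 2 = -(u ^ 2 * (σ⁻¹ ^ 2 - 1) / 2) := by ring
  rw [h1]
  apply one_sub_exp_le hy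
  nlinarith [mul_nonneg (sq_nonneg u) (sq_nonneg σ⁻¹)]

lemma final_arith {σ α c₂ t : ℝ} (hσ0 : 0 < σ) (hσ1 : σ < 1)
    (hα0 : 0 < α) (hα1 : α < 1/2) (ht : |t| ≤ 2⁻¹ * σ * α)
    (hc₂0 : 0 ≤ c₂) (hc₂ : c₂ ≤ 2⁻¹ * σ * α) :
    480 * c₂ ^ 3 * (σ⁻¹ ^ 2 / 2) + 32 * |t| ^ 3 * (σ⁻¹ ^ 2 / 2) ≤ 256 * σ * α ^ 2 := by
  have hc3 : c₂ ^ 3 ≤ (2⁻¹ * σ * α) ^ 3 := pow_le_pow_left₀ hc₂0 hc₂ 3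
  have ht3 : |t| ^ 3 ≤ (2⁻¹ * σ * α) ^ 3 := pow_le_pow_left₀ (abs_nonneg t) ht 3
  have hK : (0:ℝ) ≤ σ⁻¹ ^ 2 / 2 := by positivity
  have hb1 : 480 * c₂ ^ 3 * (σ⁻¹ ^ 2 / 2) + 32 * |t| ^ 3 * (σ⁻¹ ^ 2 / 2)
      ≤ 512 * (2⁻¹ * σ * α) ^ 3 * (σ⁻¹ ^ 2 / 2) := by nlinarith
  have hb2 : 512 * (2⁻¹ * σ * α) ^ 3 * (σ⁻¹ ^ 2 / 2) = 32 * σ * α ^ 3 := by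
    field_simp
    ring
  have hb3 : 32 * σ * α ^ 3 ≤ 256 * σ * α ^ 2 := by
    nlinarith [mul_nonneg (mul_nonneg (le_of_lt hσ0) (sq_nonneg α))
      (by linarith : (0:ℝ) ≤ 8 - α)]
  linarith

lemma main_est_two (n : ℕ) (w₀ w b : EuclideanSpace ℝ (Fin (n+2))) (σ α t c₂ : ℝ)
    (hw₀ : ‖w₀‖ = 1) (hb : ‖b‖ = 1) (hw₀b : ⟪w₀, b⟫ = 0)
    (hσ : σ ∈ Set.Ioo (0:ℝ) 1) (hα : α ∈ Set.Ioo (0:ℝ) (1/2))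
    (ht : |t| ≤ 2⁻¹ * σ * α) (hc₂0 : 0 ≤ c₂) (hc₂ : c₂ ≤ 2⁻¹ * σ * α)
    (hkey : ∀ x : EuclideanSpace ℝ (Fin (n+2)), sgn ⟪w₀, x⟫ ≠ sgn (⟪w, x⟫ + t) →
      |⟪w₀, x⟫| ≤ 2 * c₂ * |⟪b, x⟫| + 2 * |t|) :
    ∫ x, (if sgn ⟪w₀, x⟫ ≠ sgn (⟪w, x⟫ + t) then (1:ℝ) else 0) *
        (1 - Real.exp (-(⟪w₀, x⟫) ^ 2 * (σ⁻¹ ^ 2 - 1) / 2)) ∂(stdGaussian (n+2))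
      ≤ 256 * σ * α ^ 2 := by
  set K : ℝ := σ⁻¹ ^ 2 / 2 with hKdef
  have hK : 0 ≤ K := by positivity
  set f : EuclideanSpace ℝ (Fin (n+2)) → ℝ := fun x =>
    (if sgn ⟪w₀, x⟫ ≠ sgn (⟪w, x⟫ + t) then (1:ℝ) else 0) *
      (1 - Real.exp (-(⟪w₀, x⟫) ^ 2 * (σ⁻¹ ^ 2 - 1) / 2)) with hfdef
  have hfm : Measurable f := meas_f w₀ w σ t
  have hf0 : 0 ≤ᵐ[stdGaussian (n+2)] f := by
    apply Filter.Eventually.of_forall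
    intro x
    apply mul_nonneg
    · split <;> norm_num
    · exact weight_nonneg hσ.1 (le_of_lt hσ.2)
  rw [integral_eq_lintegral_of_nonneg_ae hf0 hfm.aestronglyMeasurable]
  apply ENNReal.toReal_le_of_le_ofReal
    (by nlinarith [hσ.1, sq_nonneg α] : (0:ℝ) ≤ 256 * σ * α ^ 2)
  set H : ℝ → ℝ → ℝ≥0∞ := fun s u =>
    if |u| ≤ 2 * c₂ * |s| + 2 * |t| then ENNReal.ofReal (u ^ 2 * K) else 0 with hHdef
  have hHm : Measurable fun p : ℝ × ℝ => H p.1 p.2 := by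
    apply Measurable.ite
    · exact (isClosed_le (continuous_abs.comp continuous_snd)
        ((continuous_const.mul (continuous_abs.comp continuous_fst)).add
          continuous_const)).measurableSet
    · exact Measurable.ennreal_ofReal
        (((continuous_pow 2).comp continuous_snd).mul continuous_const).measurable
    · exact measurable_const
  have step1 : ∀ x, ENNReal.ofReal (f x) ≤ H ⟪b, x⟫ ⟪w₀, x⟫ := by
    intro x
    by_cases hx : sgn ⟪w₀, x⟫ ≠ sgn (⟪w, x⟫ + t)
    · have hcond := hkey x hx
      rw [hfdef]
      simp only [if_pos hx, one_mul, hHdef, if_pos hcond]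
      exact ENNReal.ofReal_le_ofReal (weight_le hσ.1 (le_of_lt hσ.2))
    · rw [hfdef]
      simp only [if_neg hx, zero_mul, ENNReal.ofReal_zero]
      exact zero_le
  calc ∫⁻ x, ENNReal.ofReal (f x) ∂(stdGaussian (n+2))
      ≤ ∫⁻ x, H ⟪b, x⟫ ⟪w₀, x⟫ ∂(stdGaussian (n+2)) := lintegral_mono step1
    _ = ∫⁻ s, ∫⁻ u, H s u ∂(gaussianReal 0 1) ∂(gaussianReal 0 1) :=
        lint_std_two n b w₀ hb hw₀ (by rw [real_inner_comm]; exact hw₀b) H hHm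
    _ ≤ ∫⁻ s, ENNReal.ofReal ((2 * c₂ * |s| + 2 * |t|) ^ 3 * K) ∂(gaussianReal 0 1) := by
        apply lintegral_mono
        intro s
        exact inner_bound _ K (by positivity) hK
    _ ≤ ENNReal.ofReal (480 * c₂ ^ 3 * K + 32 * |t| ^ 3 * K) := outer_bound c₂ t K hc₂0 hK
    _ ≤ ENNReal.ofReal (256 * σ * α ^ 2) := ENNReal.ofReal_le_ofReal
        (final_arith hσ.1 hσ.2 hα.1 hα.2 ht hc₂0 hc₂)

lemma main_est_one (n : ℕ) (w₀ w : EuclideanSpace ℝ (Fin (n+1))) (σ α t : ℝ)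
    (hw₀ : ‖w₀‖ = 1)
    (hσ : σ ∈ Set.Ioo (0:ℝ) 1) (hα : α ∈ Set.Ioo (0:ℝ) (1/2))
    (ht : |t| ≤ 2⁻¹ * σ * α)
    (hkey : ∀ x : EuclideanSpace ℝ (Fin (n+1)), sgn ⟪w₀, x⟫ ≠ sgn (⟪w, x⟫ + t) →
      |⟪w₀, x⟫| ≤ 2 * |t|) :
    ∫ x, (if sgn ⟪w₀, x⟫ ≠ sgn (⟪w, x⟫ + t) then (1:ℝ) else 0) *
        (1 - Real.exp (-(⟪w₀, x⟫) ^ 2 * (σ⁻¹ ^ 2 - 1) / 2)) ∂(stdGaussian (n+1))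
      ≤ 256 * σ * α ^ 2 := by
  set K : ℝ := σ⁻¹ ^ 2 / 2 with hKdef
  have hK : 0 ≤ K := by positivity
  set f : EuclideanSpace ℝ (Fin (n+1)) → ℝ := fun x =>
    (if sgn ⟪w₀, x⟫ ≠ sgn (⟪w, x⟫ + t) then (1:ℝ) else 0) *
      (1 - Real.exp (-(⟪w₀, x⟫) ^ 2 * (σ⁻¹ ^ 2 - 1) / 2)) with hfdef
  have hfm : Measurable f := meas_f w₀ w σ t
  have hf0 : 0 ≤ᵐ[stdGaussian (n+1)] f := by
    apply Filter.Eventually.of_forall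
    intro x
    apply mul_nonneg
    · split <;> norm_num
    · exact weight_nonneg hσ.1 (le_of_lt hσ.2)
  rw [integral_eq_lintegral_of_nonneg_ae hf0 hfm.aestronglyMeasurable]
  apply ENNReal.toReal_le_of_le_ofReal
    (by nlinarith [hσ.1, sq_nonneg α] : (0:ℝ) ≤ 256 * σ * α ^ 2)
  set H : ℝ → ℝ≥0∞ := fun u =>
    if |u| ≤ 2 * |t| then ENNReal.ofReal (u ^ 2 * K) else 0 with hHdef
  have hHm : Measurable H := by
    apply Measurable.ite
    · exact (isClosed_le continuous_abs continuous_const).measurableSet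
    · exact Measurable.ennreal_ofReal ((continuous_pow 2).mul continuous_const).measurable
    · exact measurable_const
  have step1 : ∀ x, ENNReal.ofReal (f x) ≤ H ⟪w₀, x⟫ := by
    intro x
    by_cases hx : sgn ⟪w₀, x⟫ ≠ sgn (⟪w, x⟫ + t)
    · have hcond := hkey x hx
      rw [hfdef]
      simp only [if_pos hx, one_mul, hHdef, if_pos hcond]
      exact ENNReal.ofReal_le_ofReal (weight_le hσ.1 (le_of_lt hσ.2))
    · rw [hfdef]
      simp only [if_neg hx, zero_mul, ENNReal.ofReal_zero]
      exact zero_le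
  have harith : (2 * |t|) ^ 3 * K ≤ 256 * σ * α ^ 2 := by
    have h0 : (0:ℝ) ≤ |t| ^ 3 * (σ⁻¹ ^ 2 / 2) := by positivity
    have h1 := final_arith hσ.1 hσ.2 hα.1 hα.2 ht (le_refl 0 : (0:ℝ) ≤ 0)
      (by nlinarith [hσ.1, hα.1] : (0:ℝ) ≤ 2⁻¹ * σ * α)
    calc (2 * |t|) ^ 3 * K = 8 * (|t| ^ 3 * (σ⁻¹ ^ 2 / 2)) := by rw [hKdef]; ring
      _ ≤ 256 * σ * α ^ 2 := by nlinarith [h1, h0]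
  calc ∫⁻ x, ENNReal.ofReal (f x) ∂(stdGaussian (n+1))
      ≤ ∫⁻ x, H ⟪w₀, x⟫ ∂(stdGaussian (n+1)) := lintegral_mono step1
    _ = ∫⁻ u, H u ∂(gaussianReal 0 1) := lint_std_one n w₀ hw₀ H hHm
    _ ≤ ENNReal.ofReal ((2 * |t|) ^ 3 * K) := inner_bound _ K (by positivity) hK
    _ ≤ ENNReal.ofReal (256 * σ * α ^ 2) := ENNReal.ofReal_le_ofReal harith


end LocAux

open LocAux in
/-- if a near-homogeneous halfspace is close in angle and bias to a
homogeneous one, their disagreement restricted to rejected points is small. -/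
theorem localization_rejected_mass :
    ∃ c : ℝ, c ∈ Set.Ioo (0 : ℝ) 1 ∧ ∃ C : ℝ, 0 < C ∧
      ∀ (d : ℕ) (w₀ w : EuclideanSpace ℝ (Fin d)), ‖w₀‖ = 1 → ‖w‖ = 1 →
        ∀ σ : ℝ, σ ∈ Set.Ioo (0 : ℝ) 1 → ∀ α : ℝ, α ∈ Set.Ioo (0 : ℝ) c →
        ∀ t : ℝ, |t| ≤ c * σ * α →
          Real.arccos (⟪w₀, w⟫ / (‖w₀‖ * ‖w‖)) ≤ c * σ * α →
          ∫ x, (if sgn (⟪w₀, x⟫) ≠ sgn (⟪w, x⟫ + t) then (1 : ℝ) else 0) *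
              (1 - Real.exp (-(⟪w₀, x⟫) ^ 2 * (σ⁻¹ ^ 2 - 1) / 2)) ∂(stdGaussian d) ≤
            C * σ * α ^ 2 := by
  refine ⟨1/2, ⟨by norm_num, by norm_num⟩, 256, by norm_num, ?_⟩
  intro d w₀ w hw₀ hw σ hσ α hα t ht hθ
  have hα' : α ∈ Set.Ioo (0:ℝ) (1/2) := hα
  have ht' : |t| ≤ 2⁻¹ * σ * α := by
    calc |t| ≤ 1/2 * σ * α := ht
      _ = 2⁻¹ * σ * α := by norm_num
  rw [hw₀, hw, one_mul, div_one] at hθ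
  set c₁ : ℝ := ⟪w₀, w⟫ with hc₁def
  have hc₁abs : |c₁| ≤ 1 := by
    have := abs_real_inner_le_norm w₀ w
    rwa [hw₀, hw, one_mul] at this
  set θ : ℝ := Real.arccos c₁ with hθdef
  have hθ0 : 0 ≤ θ := Real.arccos_nonneg _
  have hθle : θ ≤ 2⁻¹ * σ * α := by
    calc θ ≤ 1/2 * σ * α := hθ
      _ = 2⁻¹ * σ * α := by norm_num
  have hθquarter : θ ≤ 1/4 := by nlinarith [hσ.1, hσ.2, hα.1, hα.2]
  have hcos : Real.cos θ = c₁ :=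
    Real.cos_arccos (by linarith [(abs_le.1 hc₁abs).1]) (by linarith [(abs_le.1 hc₁abs).2])
  have hc₁ge : (7:ℝ)/8 ≤ c₁ := by
    have h1 : 1 - θ ^ 2 / 2 ≤ Real.cos θ := Real.one_sub_sq_div_two_le_cos
    nlinarith
  set P : EuclideanSpace ℝ (Fin d) := w - c₁ • w₀ with hPdef
  have hPw₀ : ⟪w₀, P⟫ = 0 := by
    rw [hPdef, inner_sub_right, real_inner_smul_right, real_inner_self_eq_norm_sq, hw₀]
    ring
  have hPsq : ‖P‖ ^ 2 = 1 - c₁ ^ 2 := by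
    rw [hPdef, norm_sub_sq_real, real_inner_smul_right, real_inner_comm w₀ w, ← hc₁def,
      norm_smul, hw₀, hw]
    simp [sq_abs]
    ring
  have hdecomp : ∀ x : EuclideanSpace ℝ (Fin d), ⟪w, x⟫ = c₁ * ⟪w₀, x⟫ + ⟪P, x⟫ := by
    intro x
    have hwx : w = c₁ • w₀ + P := by rw [hPdef]; abel
    rw [show (⟪w, x⟫ : ℝ) = ⟪c₁ • w₀ + P, x⟫ from by rw [← hwx], inner_add_left,
      real_inner_smul_left]
  have hPle : ‖P‖ ≤ 2⁻¹ * σ * α := by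
    have h1 : ‖P‖ = Real.sin θ := by
      rw [hθdef, Real.sin_arccos, ← hPsq, Real.sqrt_sq (norm_nonneg P)]
    have h2 : Real.sin θ ≤ θ := Real.sin_le hθ0
    linarith
  have hkey0 : ∀ x : EuclideanSpace ℝ (Fin d), sgn ⟪w₀, x⟫ ≠ sgn (⟪w, x⟫ + t) →
      |⟪w₀, x⟫| ≤ 2 * |⟪P, x⟫| + 2 * |t| := by
    intro x hx
    have h1 := sgn_diff_bound hx
    have h2 : ⟪w₀, x⟫ - (⟪w, x⟫ + t) = (1 - c₁) * ⟪w₀, x⟫ - ⟪P, x⟫ - t := by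
      rw [hdecomp x]; ring
    have h3 : |(1 - c₁) * ⟪w₀, x⟫ - ⟪P, x⟫ - t|
        ≤ (1 - c₁) * |⟪w₀, x⟫| + |⟪P, x⟫| + |t| := by
      calc |(1 - c₁) * ⟪w₀, x⟫ - ⟪P, x⟫ - t|
          ≤ |(1 - c₁) * ⟪w₀, x⟫ - ⟪P, x⟫| + |t| := abs_sub _ _
        _ ≤ |(1 - c₁) * ⟪w₀, x⟫| + |⟪P, x⟫| + |t| := by
            have := abs_sub ((1 - c₁) * ⟪w₀, x⟫) (⟪P, x⟫ : ℝ)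
            linarith
        _ = (1 - c₁) * |⟪w₀, x⟫| + |⟪P, x⟫| + |t| := by
            rw [abs_mul, abs_of_nonneg (by linarith [(abs_le.1 hc₁abs).2] : (0:ℝ) ≤ 1 - c₁)]
    rw [h2] at h1
    have h4 : (1 - c₁) ≤ 1/8 := by linarith
    nlinarith [abs_nonneg (⟪w₀, x⟫ : ℝ)]
  by_cases hP : P = 0
  · -- degenerate case : w = w₀
    have hd : d ≠ 0 := by
      intro h
      subst h
      have : ‖w₀‖ = 0 := by
        rw [EuclideanSpace.norm_eq]
        simp
      rw [hw₀] at this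
      norm_num at this
    obtain ⟨n, rfl⟩ : ∃ n, d = n + 1 := ⟨d - 1, by omega⟩
    apply main_est_one n w₀ w σ α t hw₀ hσ hα' ht'
    intro x hx
    have := hkey0 x hx
    rw [hP] at this
    simpa using this
  · set b : EuclideanSpace ℝ (Fin d) := ‖P‖⁻¹ • P with hbdef
    have hPn0 : ‖P‖ ≠ 0 := norm_ne_zero_iff.2 hP
    have hbnorm : ‖b‖ = 1 := by
      rw [hbdef, norm_smul, norm_inv, norm_norm, inv_mul_cancel₀ hPn0]
    have hw₀b : ⟪w₀, b⟫ = 0 := by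
      rw [hbdef, real_inner_smul_right, hPw₀, mul_zero]
    have hpx : ∀ x : EuclideanSpace ℝ (Fin d), |⟪P, x⟫| = ‖P‖ * |⟪b, x⟫| := by
      intro x
      rw [hbdef, real_inner_smul_left, abs_mul, abs_inv, abs_norm]
      field_simp
    have hd2 : 2 ≤ d := by
      classical
      have haa : (⟪w₀, w₀⟫ : ℝ) = 1 := by
        rw [real_inner_self_eq_norm_sq, hw₀]; norm_num
      have hbb : (⟪b, b⟫ : ℝ) = 1 := by
        rw [real_inner_self_eq_norm_sq, hbnorm]; norm_num
      have hbw₀ : (⟪b, w₀⟫ : ℝ) = 0 := by rw [real_inner_comm]; exact hw₀b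
      have hcase : ∀ k : Fin 2, k = 0 ∨ k = 1 := by decide
      have ho : Orthonormal ℝ ![w₀, b] := by
        rw [orthonormal_iff_ite]
        intro i j
        rcases hcase i with rfl | rfl <;> rcases hcase j with rfl | rfl <;>
            simp only [Matrix.cons_val_zero, Matrix.cons_val_one, Matrix.head_cons]
        · simpa using haa
        · simpa using hw₀b
        · simpa using hbw₀
        · simpa using hbb
      have hli := ho.linearIndependent
      have hcard := hli.fintype_card_le_finrank
      simpa [finrank_euclideanSpace] using hcard
    obtain ⟨n, rfl⟩ : ∃ n, d = n + 2 := ⟨d - 2, by omega⟩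
    apply main_est_two n w₀ w b σ α t ‖P‖ hw₀ hbnorm hw₀b hσ hα' ht' (norm_nonneg P) hPle
    intro x hx
    have h1 := hkey0 x hx
    rw [hpx x] at h1
    calc |⟪w₀, x⟫| ≤ 2 * (‖P‖ * |⟪b, x⟫|) + 2 * |t| := h1
      _ = 2 * ‖P‖ * |⟪b, x⟫| + 2 * |t| := by ring
end
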